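/- Suppose additionally that the first moment of a⁺ vanishes, 𝔪 := ∫ s·a⁺(s) ds = 0 (for instance if a⁺ is an even function). Then every traveling-wave speed is positive: if ψ is a traveling-wave profile with speed c, then c > 0. -/

import Mathlib

open MeasureTheory Real Set Filter

noncomputable section

/-- The set of positive exponents at which the bilateral Laplace transform of `f`
converges absolutely. -/
def lapSet (f : ℝ → ℝ) : Set ℝ :=
  {l : ℝ | 0 < l ∧ Integrable (fun s => f s * Real.exp (l * s))}

/-- The abscissa of convergence of the bilateral Laplace transform of `f`,
as an extended real number. -/
def lapAbsc (f : ℝ → ℝ) : EReal :=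
  sSup ((fun l : ℝ => (l : EReal)) '' lapSet f)

/-- `G(λ) = (κ⁺ A(λ) - m)/λ` where `A(λ) = ∫ a(s) e^{λ s} ds`. -/
def Gfun (κp m : ℝ) (a : ℝ → ℝ) (l : ℝ) : ℝ :=
  (κp * (∫ s, a s * Real.exp (l * s)) - m) / l

/-- The hypotheses on the kernels `a⁺`, `a⁻` and the constants. -/
def KernelHyp (κp m κl κnl θ : ℝ) (ap an : ℝ → ℝ) : Prop :=
  0 < m ∧ m < κp ∧ 0 ≤ κl ∧ 0 ≤ κnl ∧ 0 < κl + κnl ∧ θ = (κp - m) / (κl + κnl) ∧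
  Integrable ap ∧ (∀ s, 0 ≤ ap s) ∧ (∫ s, ap s) = 1 ∧
  Integrable an ∧ (∀ s, 0 ≤ an s) ∧ (∫ s, an s) = 1 ∧
  (∃ C, ∀ s, ap s ≤ C) ∧
  (∀ᵐ s ∂(volume : Measure ℝ), κnl * θ * an s ≤ κp * ap s) ∧
  (∃ μ > (0:ℝ), Integrable (fun s => ap s * Real.exp (μ * s))) ∧
  (∃ r ≥ (0:ℝ), ∃ ρ₀ > (0:ℝ), ∃ δ₀ > (0:ℝ),
    ∀ᵐ s ∂(volume : Measure ℝ), s ∈ Set.Icc (r - δ₀) (r + δ₀) → ρ₀ ≤ ap s) ∧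
  Integrable (fun s => |s| * ap s)

/-- A (monotone) traveling-wave profile `ψ` with speed `c`. -/
def IsTW (κp m κl κnl θ : ℝ) (ap an : ℝ → ℝ) (c : ℝ) (ψ : ℝ → ℝ) : Prop :=
  (∀ s, ψ s ∈ Set.Icc (0 : ℝ) θ) ∧ Antitone ψ ∧ ContDiff ℝ 1 ψ ∧
  (∃ C, ∀ s, |deriv ψ s| ≤ C) ∧
  Tendsto ψ atBot (nhds θ) ∧ Tendsto ψ atTop (nhds 0) ∧
  (∃ μ₀ > (0:ℝ), Integrable (fun s => ψ s * Real.exp (μ₀ * s))) ∧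
  ∀ s, c * deriv ψ s + κp * (∫ τ, ap (s - τ) * ψ τ) - m * ψ s
      - κnl * ψ s * (∫ τ, an (s - τ) * ψ τ) - κl * (ψ s) ^ 2 = 0

lemma exp_indicator_integrable {b : ℝ} (hb : 0 < b) :
    Integrable ((Set.Iic (0:ℝ)).indicator fun s => Real.exp (b*s)) := by
  have hg : Integrable ((Set.Iic (0:ℝ)).indicator Real.exp) := by
    rw [integrable_indicator_iff measurableSet_Iic]; exact integrableOn_exp_Iic 0
  have h2 := (integrable_comp_mul_left_iff ((Set.Iic (0:ℝ)).indicator Real.exp) hb.ne').mpr hg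
  have : (fun s => ((Set.Iic (0:ℝ)).indicator Real.exp) (b*s))
      = (Set.Iic (0:ℝ)).indicator fun s => Real.exp (b*s) := by
    funext s
    by_cases hs : s ≤ (0:ℝ)
    · have : b * s ≤ 0 := mul_nonpos_iff.mpr (Or.inl ⟨hb.le, hs⟩)
      simp [Set.indicator_of_mem, this, hs]
    · push_neg at hs
      have : ¬ (b * s ≤ 0) := by nlinarith
      simp [Set.indicator_of_notMem, this, hs.not_ge]
  rwa [this] at h2

lemma antitone_deriv_nonpos {ψ : ℝ → ℝ} (h : Antitone ψ) (hd : Differentiable ℝ ψ) (x : ℝ) :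
    deriv ψ x ≤ 0 := by
  have hslope := hasDerivAt_iff_tendsto_slope.mp (hd x).hasDerivAt
  refine le_of_tendsto hslope ?_
  filter_upwards [self_mem_nhdsWithin] with y hy
  have hy' : y ≠ x := hy
  rw [slope_def_field]
  rcases lt_or_gt_of_ne hy' with h1 | h1
  · exact div_nonpos_of_nonneg_of_nonpos (by simpa using h h1.le) (by linarith)
  · exact div_nonpos_of_nonpos_of_nonneg (by simpa using h h1.le) (by linarith)

set_option maxHeartbeats 1000000 in
theorem speed_positive_aux
    (κp m κl κnl θ : ℝ) (ap an : ℝ → ℝ)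
    (hm : 0 < m) (hmκ : m < κp) (hκl : 0 ≤ κl) (hκnl : 0 ≤ κnl) (hκsum : 0 < κl + κnl)
    (hθ : θ = (κp - m) / (κl + κnl))
    (hapInt : Integrable ap) (hap0 : ∀ s, 0 ≤ ap s) (hapI : (∫ s, ap s) = 1)
    (hanInt : Integrable an) (han0 : ∀ s, 0 ≤ an s) (hanI : (∫ s, an s) = 1)
    (μ : ℝ) (hμpos : 0 < μ) (hμint : Integrable (fun s => ap s * Real.exp (μ * s)))
    (r : ℝ) (hr : 0 ≤ r) (ρ₀ : ℝ) (hρ₀ : 0 < ρ₀) (δ₀ : ℝ) (hδ₀ : 0 < δ₀)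
    (hlow : ∀ᵐ s ∂(volume : Measure ℝ), s ∈ Set.Icc (r - δ₀) (r + δ₀) → ρ₀ ≤ ap s)
    (hmom : Integrable (fun s => s * ap s))
    (h𝔪 : (∫ s, s * ap s) = 0)
    (c : ℝ) (ψ : ℝ → ℝ)
    (hrange : ∀ s, ψ s ∈ Set.Icc (0:ℝ) θ) (hanti : Antitone ψ) (hC1 : ContDiff ℝ 1 ψ)
    (hbot : Tendsto ψ atBot (nhds θ))
    (μ₀ : ℝ) (hμ₀ : 0 < μ₀) (hψint : Integrable (fun s => ψ s * Real.exp (μ₀ * s)))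
    (heq : ∀ s, c * deriv ψ s + κp * (∫ τ, ap (s - τ) * ψ τ) - m * ψ s
      - κnl * ψ s * (∫ τ, an (s - τ) * ψ τ) - κl * (ψ s) ^ 2 = 0) :
    0 < c := by
  by_contra hc
  push_neg at hc
  have hκp : 0 < κp := hm.trans hmκ
  have hθpos : 0 < θ := hθ ▸ div_pos (by linarith) hκsum
  have hθeq : (κl + κnl) * θ = κp - m := by rw [hθ]; field_simp
  have hψ0 : ∀ s, 0 ≤ ψ s := fun s => (hrange s).1
  have hψθ : ∀ s, ψ s ≤ θ := fun s => (hrange s).2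
  have hψcont : Continuous ψ := hC1.continuous
  have hψmeas : AEStronglyMeasurable ψ (volume : Measure ℝ) := hψcont.aestronglyMeasurable
  set l : ℝ := min μ μ₀ with hl
  have hlpos : 0 < l := lt_min hμpos hμ₀
  have hlμ : l ≤ μ := min_le_left _ _
  have hlμ₀ : l ≤ μ₀ := min_le_right _ _
  have hexpc : ∀ b : ℝ, Continuous fun s : ℝ => Real.exp (b * s) :=
    fun b => Real.continuous_exp.comp (continuous_const.mul continuous_id)
  -- Integrability of g = ψ e^{l·}
  have hgInt : Integrable (fun s => ψ s * Real.exp (l * s)) := by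
    refine Integrable.mono'
      (hψint.add ((exp_indicator_integrable hlpos).const_mul θ))
      ((hψcont.mul (hexpc l)).aestronglyMeasurable) (ae_of_all _ ?_)
    intro s
    rw [Real.norm_eq_abs, abs_of_nonneg (mul_nonneg (hψ0 s) (Real.exp_pos _).le)]
    by_cases hs : s ≤ (0:ℝ)
    · have h1 : ψ s * Real.exp (l * s) ≤ θ * Real.exp (l * s) :=
        mul_le_mul_of_nonneg_right (hψθ s) (Real.exp_pos _).le
      have h2 : (0:ℝ) ≤ ψ s * Real.exp (μ₀ * s) :=
        mul_nonneg (hψ0 s) (Real.exp_pos _).le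
      have h3 : (Set.Iic (0:ℝ)).indicator (fun s => Real.exp (l * s)) s = Real.exp (l * s) :=
        Set.indicator_of_mem (Set.mem_Iic.mpr hs) _
      simp only [Pi.add_apply, h3]
      linarith
    · push_neg at hs
      have h1 : Real.exp (l * s) ≤ Real.exp (μ₀ * s) :=
        Real.exp_le_exp.mpr (by nlinarith)
      have h2 : ψ s * Real.exp (l * s) ≤ ψ s * Real.exp (μ₀ * s) :=
        mul_le_mul_of_nonneg_left h1 (hψ0 s)
      have h3 : (Set.Iic (0:ℝ)).indicator (fun s => Real.exp (l * s)) s = 0 :=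
        Set.indicator_of_notMem (fun h => absurd (Set.mem_Iic.mp h) hs.not_ge) _
      simp only [Pi.add_apply, h3, mul_zero]
      linarith
  -- Integrability of f = ap e^{l·}
  have hfInt : Integrable (fun s => ap s * Real.exp (l * s)) := by
    refine Integrable.mono' (hμint.add hapInt)
      (hapInt.aestronglyMeasurable.mul (hexpc l).aestronglyMeasurable) (ae_of_all _ ?_)
    intro s
    rw [Real.norm_eq_abs, abs_of_nonneg (mul_nonneg (hap0 s) (Real.exp_pos _).le)]
    by_cases hs : s ≤ (0:ℝ)
    · have h1 : Real.exp (l * s) ≤ 1 := Real.exp_le_one_iff.mpr (by nlinarith)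
      have h2 : ap s * Real.exp (l * s) ≤ ap s := by nlinarith [hap0 s, Real.exp_pos (l*s)]
      have h3 : (0:ℝ) ≤ ap s * Real.exp (μ * s) := mul_nonneg (hap0 s) (Real.exp_pos _).le
      simp only [Pi.add_apply]; linarith
    · push_neg at hs
      have h1 : Real.exp (l * s) ≤ Real.exp (μ * s) := Real.exp_le_exp.mpr (by nlinarith)
      have h2 : ap s * Real.exp (l * s) ≤ ap s * Real.exp (μ * s) :=
        mul_le_mul_of_nonneg_left h1 (hap0 s)
      simp only [Pi.add_apply]; linarith [hap0 s]
  set A : ℝ := ∫ s, ap s * Real.exp (l * s) with hA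
  set Ψ : ℝ := ∫ s, ψ s * Real.exp (l * s) with hΨ
  -- A > 1
  have hmom' : Integrable (fun s => l * (s * ap s)) := hmom.const_mul l
  have hHrw : (fun s => ap s * (Real.exp (l * s) - 1 - l * s))
      = fun s => (ap s * Real.exp (l * s) - ap s) - l * (s * ap s) := by
    funext s; ring
  have h12 : Integrable (fun s => ap s * Real.exp (l * s) - ap s) := hfInt.sub hapInt
  have hHInt : Integrable (fun s => ap s * (Real.exp (l * s) - 1 - l * s)) := by
    rw [hHrw]; exact h12.sub hmom'
  have hHval : (∫ s, ap s * (Real.exp (l * s) - 1 - l * s)) = A - 1 := by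
    rw [hHrw, integral_sub h12 hmom', integral_sub hfInt hapInt,
      MeasureTheory.integral_const_mul, hapI, h𝔪, ← hA]
    ring
  have hHnn : ∀ s, 0 ≤ ap s * (Real.exp (l * s) - 1 - l * s) := by
    intro s
    have := Real.add_one_le_exp (l * s)
    exact mul_nonneg (hap0 s) (by linarith)
  have hcontH : Continuous fun s => ρ₀ * (Real.exp (l * s) - 1 - l * s) :=
    continuous_const.mul (((hexpc l).sub continuous_const).sub
      (continuous_const.mul continuous_id))
  have hpos1 : 0 < ∫ s in Set.Ioc r (r + δ₀), ρ₀ * (Real.exp (l * s) - 1 - l * s) := by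
    have hii : IntervalIntegrable (fun s => ρ₀ * (Real.exp (l * s) - 1 - l * s))
        volume r (r + δ₀) := hcontH.intervalIntegrable r (r + δ₀)
    have hposOn : ∀ x ∈ Set.Ioo r (r + δ₀), 0 < ρ₀ * (Real.exp (l * x) - 1 - l * x) := by
      intro x hx
      have hx0 : 0 < x := lt_of_le_of_lt hr hx.1
      have hne : l * x ≠ 0 := by positivity
      have h4 := Real.add_one_lt_exp hne
      have : 0 < Real.exp (l * x) - 1 - l * x := by linarith
      exact mul_pos hρ₀ this
    have := intervalIntegral.intervalIntegral_pos_of_pos_on hii hposOn (by linarith)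
    rwa [intervalIntegral.integral_of_le (by linarith)] at this
  have hpos2 : (∫ s in Set.Ioc r (r + δ₀), ρ₀ * (Real.exp (l * s) - 1 - l * s))
      ≤ ∫ s in Set.Ioc r (r + δ₀), ap s * (Real.exp (l * s) - 1 - l * s) := by
    refine setIntegral_mono_ae_restrict
      (hcontH.integrableOn_Ioc)
      hHInt.integrableOn ?_
    filter_upwards [ae_restrict_of_ae hlow, ae_restrict_mem measurableSet_Ioc] with s hs1 hs2
    have hsI : s ∈ Set.Icc (r - δ₀) (r + δ₀) := ⟨by linarith [hs2.1], hs2.2⟩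
    have hρ := hs1 hsI
    have hnn : 0 ≤ Real.exp (l * s) - 1 - l * s := by
      have := Real.add_one_le_exp (l * s); linarith
    exact mul_le_mul_of_nonneg_right hρ hnn
  have hA1 : 1 < A := by
    have h3 := setIntegral_le_integral (s := Set.Ioc r (r + δ₀)) hHInt (ae_of_all _ hHnn)
    have := hpos1.trans_le (hpos2.trans h3)
    rw [hHval] at this; linarith
  -- Ψ > 0
  have hΨpos : 0 < Ψ := by
    obtain ⟨s₀, hs₀⟩ := eventually_atBot.mp
      (hbot.eventually (eventually_gt_nhds (by linarith : θ / 2 < θ)))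
    have hii : IntervalIntegrable (fun s => ψ s * Real.exp (l * s)) volume (s₀ - 1) s₀ :=
      (hψcont.mul (hexpc l)).intervalIntegrable _ _
    have hp := intervalIntegral.intervalIntegral_pos_of_pos_on hii (fun x hx => ?_) (by linarith)
    · rw [intervalIntegral.integral_of_le (by linarith)] at hp
      have := setIntegral_le_integral (s := Set.Ioc (s₀ - 1) s₀) hgInt
        (ae_of_all _ fun s => mul_nonneg (hψ0 s) (Real.exp_pos _).le)
      exact hp.trans_le this
    · have : θ / 2 < ψ x := hs₀ x hx.2.le
      exact mul_pos (by linarith) (Real.exp_pos _)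
  -- key pointwise inequality
  have hkey : ∀ s, (∫ τ, ap (s - τ) * ψ τ) ≤ ψ s := by
    intro s
    have hanShift : Integrable (fun τ => an (s - τ)) := hanInt.comp_sub_left s
    have hIan : Integrable (fun τ => an (s - τ) * ψ τ) := by
      refine Integrable.mono' (hanShift.mul_const θ)
        (hanShift.aestronglyMeasurable.mul hψmeas) (ae_of_all _ ?_)
      intro τ
      rw [Real.norm_eq_abs, abs_of_nonneg (mul_nonneg (han0 _) (hψ0 τ))]
      exact mul_le_mul_of_nonneg_left (hψθ τ) (han0 _)
    have hconv_le : (∫ τ, an (s - τ) * ψ τ) ≤ θ := by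
      have h1 : (∫ τ, an (s - τ) * ψ τ) ≤ ∫ τ, an (s - τ) * θ :=
        integral_mono hIan (hanShift.mul_const θ)
          (fun τ => mul_le_mul_of_nonneg_left (hψθ τ) (han0 _))
      have h2 : (∫ τ, an (s - τ) * θ) = θ := by
        rw [integral_mul_const, integral_sub_left_eq_self an volume s, hanI, one_mul]
      linarith
    have hconv_nn : 0 ≤ ∫ τ, an (s - τ) * ψ τ :=
      integral_nonneg fun τ => mul_nonneg (han0 _) (hψ0 _)
    have hder : deriv ψ s ≤ 0 := antitone_deriv_nonpos hanti (hC1.differentiable one_ne_zero) s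
    have hcd : 0 ≤ c * deriv ψ s := by nlinarith
    have he := heq s
    have h1 : κnl * ψ s * (∫ τ, an (s - τ) * ψ τ) ≤ κnl * ψ s * θ :=
      mul_le_mul_of_nonneg_left hconv_le (mul_nonneg hκnl (hψ0 s))
    have h2 : κl * ψ s ^ 2 ≤ κl * (θ * ψ s) := by
      nlinarith [mul_nonneg hκl (mul_nonneg (hψ0 s) (sub_nonneg.mpr (hψθ s)))]
    have h4 : κnl * ψ s * θ + κl * (θ * ψ s) = (κp - m) * ψ s := by
      rw [← hθeq]; ring
    have h3 : κp * (∫ τ, ap (s - τ) * ψ τ) ≤ κp * ψ s := by linarith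
    exact le_of_mul_le_mul_left h3 hκp
  -- convolution step
  set L : ℝ →L[ℝ] ℝ →L[ℝ] ℝ := ContinuousLinearMap.mul ℝ ℝ with hLdef
  set F : ℝ → ℝ := convolution (fun s => ap s * Real.exp (l * s))
      (fun s => ψ s * Real.exp (l * s)) L volume with hFdef
  have hFeq : ∀ s, F s = Real.exp (l * s) * ∫ τ, ap (s - τ) * ψ τ := by
    intro s
    rw [hFdef, convolution_def]
    have hptw : ∀ t : ℝ, L (ap t * Real.exp (l * t)) (ψ (s - t) * Real.exp (l * (s - t)))
        = Real.exp (l * s) * (ap t * ψ (s - t)) := by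
      intro t
      simp only [hLdef, ContinuousLinearMap.mul_apply']
      rw [show ap t * Real.exp (l * t) * (ψ (s - t) * Real.exp (l * (s - t)))
          = ap t * ψ (s - t) * (Real.exp (l * t) * Real.exp (l * (s - t))) by ring,
        ← Real.exp_add, show l * t + l * (s - t) = l * s by ring]
      ring
    simp_rw [hptw]
    rw [integral_const_mul]
    congr 1
    rw [← integral_sub_left_eq_self (fun t => ap t * ψ (s - t)) volume s]
    congr 1; funext x; rw [sub_sub_cancel]
  have hFint : Integrable F := Integrable.integrable_convolution L hfInt hgInt
  have hFle : ∀ s, F s ≤ ψ s * Real.exp (l * s) := by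
    intro s
    rw [hFeq s, mul_comm (ψ s)]
    exact mul_le_mul_of_nonneg_left (hkey s) (Real.exp_pos _).le
  have hmono := integral_mono hFint hgInt hFle
  have hFI : (∫ s, F s) = A * Ψ := by
    rw [hFdef, integral_convolution L hfInt hgInt]
    simp [hLdef, ContinuousLinearMap.mul_apply', hA, hΨ]
  rw [hFI] at hmono
  nlinarith

set_option maxHeartbeats 1000000 in
/-- if the first moment of `a⁺` vanishes, `𝔪 = ∫ s a⁺(s) ds = 0`
(e.g. for even `a⁺`), then every traveling-wave speed is positive. -/
theorem speed_positive_of_zero_first_moment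
    (κp m κl κnl θ : ℝ) (ap an : ℝ → ℝ)
    (hker : KernelHyp κp m κl κnl θ ap an)
    (hmom : Integrable (fun s => s * ap s))
    (h𝔪 : (∫ s, s * ap s) = 0) :
    ∀ c : ℝ, ∀ ψ : ℝ → ℝ, IsTW κp m κl κnl θ ap an c ψ → 0 < c := by
  rintro c ψ ⟨hrange, hanti, hC1, -, hbot, -, ⟨μ₀, hμ₀, hψint⟩, heq⟩
  obtain ⟨hm, hmκ, hκl, hκnl, hκsum, hθ, hapInt, hap0, hapI, hanInt, han0, hanI, -,
    -, ⟨μ, hμpos, hμint⟩, ⟨r, hr, ρ₀, hρ₀, δ₀, hδ₀, hlow⟩, -⟩ := hker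
  exact speed_positive_aux κp m κl κnl θ ap an hm hmκ hκl hκnl hκsum hθ hapInt hap0 hapI
    hanInt han0 hanI μ hμpos hμint r hr ρ₀ hρ₀ δ₀ hδ₀ hlow hmom h𝔪 c ψ hrange hanti hC1
    hbot μ₀ hμ₀ hψint heq

end
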